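/- Let p₀ < p < ∞. There exists a constant C > 0 such that for every measurable kernel K : [1,∞) × (0,1/2] → ℂ satisfying |K(t,r)| ≤ e^{−ρt} t^{−1} r^{−(α+1/2)} for all t ≥ 1 and 0 < r ≤ 1/2, and every f ∈ L^p((0,∞),dμ), one has ( ∫₁^∞ | ∫₀^{1/2} K(t,r) f(r) Δ(r) dr |² Δ(t) dt )^{1/2} ≤ C ‖f‖_{L^p((0,∞),dμ)}. -/

import Mathlib

open MeasureTheory Real Set

/-- The Jacobi weight `Δ(t) = (2 sinh t)^(2α+1) (2 cosh t)^(2β+1)`. -/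
noncomputable def Δj (α β : ℝ) (t : ℝ) : ℝ :=
  (2 * Real.sinh t) ^ (2 * α + 1) * (2 * Real.cosh t) ^ (2 * β + 1)

/-- The measure `dμ = Δ(t) dt`. -/
noncomputable def μj (α β : ℝ) : Measure ℝ :=
  MeasureTheory.volume.withDensity fun t => ENNReal.ofReal (Δj α β t)

lemma measurable_Δj (α β : ℝ) : Measurable (Δj α β) := by
  unfold Δj
  exact ((measurable_const.mul Real.measurable_sinh).pow measurable_const).mul
    ((measurable_const.mul Real.measurable_cosh).pow measurable_const)

lemma Δj_pos (α β : ℝ) {t : ℝ} (ht : 0 < t) : 0 < Δj α β t := by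
  unfold Δj
  have h1 : 0 < 2 * Real.sinh t := by have := Real.sinh_pos_iff.2 ht; linarith
  have h2 : 0 < 2 * Real.cosh t := by positivity
  exact mul_pos (Real.rpow_pos_of_pos h1 _) (Real.rpow_pos_of_pos h2 _)

lemma lintegral_μj_restrict (α β : ℝ) {s : Set ℝ} (hs : MeasurableSet s) (g : ℝ → ENNReal) :
    ∫⁻ r in s, g r ∂(μj α β) = ∫⁻ r in s, ENNReal.ofReal (Δj α β r) * g r := by
  rw [μj, restrict_withDensity hs,
    lintegral_withDensity_eq_lintegral_mul_non_measurable _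
      ((measurable_Δj α β).ennreal_ofReal) (ae_of_all _ fun x => ENNReal.ofReal_lt_top)]
  rfl

lemma exp_half_le_two : Real.exp (1/2 : ℝ) ≤ 2 := by
  have h : Real.exp (1/2 : ℝ) * Real.exp (1/2 : ℝ) = Real.exp 1 := by
    rw [← Real.exp_add]; norm_num
  nlinarith [Real.exp_one_lt_d9, Real.exp_pos (1/2 : ℝ)]

lemma Δj_le_small {α β : ℝ} (ha : 0 < 2*α+1) (hb : 0 < 2*β+1) {r : ℝ}
    (hr : r ∈ Ioc (0:ℝ) (1/2)) :
    Δj α β r ≤ 4 ^ (2*α+1) * 4 ^ (2*β+1) * r ^ (2*α+1) := by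
  obtain ⟨hr0, hr2⟩ := hr
  have hE2 : Real.exp r ≤ 2 := (Real.exp_le_exp.2 hr2).trans exp_half_le_two
  have hE1 : 1 ≤ Real.exp r := Real.one_le_exp hr0.le
  have hEF : Real.exp r * Real.exp (-r) = 1 := by rw [← Real.exp_add]; simp
  have hF0 : 0 < Real.exp (-r) := Real.exp_pos _
  have h2r : 1 - 2*r ≤ Real.exp (-r) * Real.exp (-r) := by
    have h := Real.add_one_le_exp (-(2*r))
    have : Real.exp (-(2*r)) = Real.exp (-r) * Real.exp (-r) := by
      rw [← Real.exp_add]; ring_nf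
    linarith [this ▸ h]
  have hsinh : 2 * Real.sinh r ≤ 4 * r := by
    rw [Real.sinh_eq]
    nlinarith [mul_le_mul_of_nonneg_left h2r (by positivity : (0:ℝ) ≤ Real.exp r * Real.exp r)]
  have hcosh : 2 * Real.cosh r ≤ 4 := by
    rw [Real.cosh_eq]
    nlinarith
  have hs0 : 0 ≤ 2 * Real.sinh r := by positivity
  have hc0 : 0 ≤ 2 * Real.cosh r := by positivity
  unfold Δj
  calc (2 * Real.sinh r) ^ (2*α+1) * (2 * Real.cosh r) ^ (2*β+1)
      ≤ (4*r) ^ (2*α+1) * (4:ℝ) ^ (2*β+1) := by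
        apply mul_le_mul (Real.rpow_le_rpow hs0 hsinh (by linarith))
          (Real.rpow_le_rpow hc0 hcosh (by linarith))
          (Real.rpow_nonneg hc0 _) (Real.rpow_nonneg (by positivity) _)
    _ = 4 ^ (2*α+1) * 4 ^ (2*β+1) * r ^ (2*α+1) := by
        rw [Real.mul_rpow (by norm_num) hr0.le]; ring

lemma Δj_le_large {α β : ℝ} (ha : 0 < 2*α+1) (hb : 0 < 2*β+1) {t : ℝ} (ht : 0 ≤ t) :
    Δj α β t ≤ 2 ^ (2*β+1) * Real.exp (2*(α+β+1)*t) := by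
  have hF : Real.exp (-t) ≤ Real.exp t := Real.exp_le_exp.2 (by linarith)
  have hsinh : 2 * Real.sinh t ≤ Real.exp t := by
    rw [Real.sinh_eq]; nlinarith [Real.exp_pos (-t)]
  have hcosh : 2 * Real.cosh t ≤ 2 * Real.exp t := by
    rw [Real.cosh_eq]; nlinarith
  have hs0 : 0 ≤ 2 * Real.sinh t := by positivity
  have hc0 : 0 ≤ 2 * Real.cosh t := by positivity
  unfold Δj
  calc (2 * Real.sinh t) ^ (2*α+1) * (2 * Real.cosh t) ^ (2*β+1)
      ≤ (Real.exp t) ^ (2*α+1) * (2 * Real.exp t) ^ (2*β+1) := by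
        apply mul_le_mul (Real.rpow_le_rpow hs0 hsinh (by linarith))
          (Real.rpow_le_rpow hc0 hcosh (by linarith))
          (Real.rpow_nonneg hc0 _) (Real.rpow_nonneg (Real.exp_pos t).le _)
    _ = 2 ^ (2*β+1) * Real.exp (2*(α+β+1)*t) := by
        rw [Real.mul_rpow (by norm_num) (Real.exp_pos t).le, ← Real.exp_mul, ← Real.exp_mul,
          mul_left_comm, ← Real.exp_add]
        congr 2
        ring

theorem stmt12 (α β : ℝ) (hβα : β < α) (hβ : -(1/2 : ℝ) < β)
    (p : ℝ) (hp : (4 * α + 4) / (2 * α + 3) < p) :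
    ∃ C : ℝ, 0 < C ∧
      ∀ K : ℝ → ℝ → ℂ, Measurable (Function.uncurry K) →
        (∀ t r : ℝ, 1 ≤ t → r ∈ Set.Ioc (0 : ℝ) (1/2) →
          ‖K t r‖ ≤ Real.exp (-(α + β + 1) * t) * t⁻¹ * r ^ (-(α + 1/2))) →
        ∀ f : ℝ → ℂ,
          MemLp f (ENNReal.ofReal p) ((μj α β).restrict (Set.Ioi 0)) →
          (∫⁻ t in Set.Ici (1 : ℝ),
              ENNReal.ofReal
                (‖∫ r in Set.Ioc (0 : ℝ) (1/2), K t r * f r * ((Δj α β r : ℝ) : ℂ)‖ ^ 2 *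
                  Δj α β t)) ^ (1 / (2 : ℝ)) ≤
            ENNReal.ofReal C *
              eLpNorm f (ENNReal.ofReal p) ((μj α β).restrict (Set.Ioi 0)) := by
  have hα : -(1/2 : ℝ) < α := lt_trans hβ hβα
  have ha1 : (0:ℝ) < 2*α+1 := by linarith
  have hb1 : (0:ℝ) < 2*β+1 := by linarith
  have ha3 : (0:ℝ) < 2*α+3 := by linarith
  have hp1 : 1 < p := by
    have h0 : (1:ℝ) ≤ (4*α+4)/(2*α+3) := by rw [le_div_iff₀ ha3]; linarith
    linarith
  have hp0 : 0 < p := by linarith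
  have hpp : (4*α+4) < p * (2*α+3) := (div_lt_iff₀ ha3).1 hp
  set q : ℝ := p / (p-1) with hqdef
  have hpq : p.HolderConjugate q := Real.HolderConjugate.conjExponent hp1
  have hq1 : 1 < q := hpq.symm.lt
  have hq0 : 0 < q := by linarith
  have hps : (0:ℝ) < p - 1 := by linarith
  have hqlt : q < (4*α+4)/(2*α+1) := by
    rw [hqdef, div_lt_div_iff₀ hps ha1]
    nlinarith
  have hqkey : (α + 1/2) * q < 2*α + 2 := by
    have h2 : (α+1/2) * ((4*α+4)/(2*α+1)) = 2*α+2 := by rw [mul_div_assoc', div_eq_iff ha1.ne']; ring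
    nlinarith [mul_lt_mul_of_pos_left hqlt (show (0:ℝ) < α+1/2 by linarith)]
  set c : ℝ := -(α + 1/2) with hcdef
  set e : ℝ := 2*α+1 + c*q with hedef
  have he : -1 < e := by rw [hedef, hcdef]; nlinarith
  -- finiteness of the kernel-exponent integral Gq
  set Gq : ENNReal := ∫⁻ r in Ioc (0:ℝ) (1/2), ENNReal.ofReal (r ^ c) ^ q ∂(μj α β)
    with hGqdef
  have hGq_lt : Gq < ⊤ := by
    rw [hGqdef, lintegral_μj_restrict α β measurableSet_Ioc]
    have hint : IntegrableOn (fun r : ℝ => (4:ℝ)^(2*α+1) * 4^(2*β+1) * r ^ e)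
        (Ioc 0 (1/2)) volume := by
      have h1 : IntegrableOn (fun r : ℝ => r ^ e) (Ioc 0 (1/2)) volume := by
        rw [← intervalIntegrable_iff_integrableOn_Ioc_of_le (by norm_num : (0:ℝ) ≤ 1/2)]
        exact intervalIntegral.intervalIntegrable_rpow' he
      exact h1.const_mul _
    refine lt_of_le_of_lt (lintegral_mono_ae ?_) hint.lintegral_lt_top
    refine (ae_restrict_iff' measurableSet_Ioc).2 (ae_of_all _ fun r hr => ?_)
    have hr0 : (0:ℝ) < r := hr.1
    rw [ENNReal.ofReal_rpow_of_nonneg (Real.rpow_nonneg hr0.le _) hq0.le,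
      ← Real.rpow_mul hr0.le, ← ENNReal.ofReal_mul]
    · apply ENNReal.ofReal_le_ofReal
      calc Δj α β r * r ^ (c*q)
          ≤ (4^(2*α+1) * 4^(2*β+1) * r ^ (2*α+1)) * r ^ (c*q) := by
            apply mul_le_mul_of_nonneg_right (Δj_le_small ha1 hb1 hr)
              (Real.rpow_nonneg hr0.le _)
        _ = 4^(2*α+1) * 4^(2*β+1) * r ^ e := by
            rw [hedef, Real.rpow_add hr0 (2*α+1) (c*q)]; exact mul_assoc _ _ _
    · exact (Δj_pos α β hr0).le
  -- finiteness of the outer integral B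
  set B : ENNReal := ∫⁻ t in Ici (1:ℝ),
      ENNReal.ofReal ((Real.exp (-(α+β+1)*t) * t⁻¹)^2 * Δj α β t) with hBdef
  have hB_lt : B < ⊤ := by
    have hint : IntegrableOn (fun t : ℝ => (2:ℝ)^(2*β+1) * t ^ (-2:ℝ)) (Ici 1) volume := by
      have h1 : IntegrableOn (fun t : ℝ => t ^ (-2:ℝ)) (Ici 1) volume := by
        rw [integrableOn_Ici_iff_integrableOn_Ioi]
        exact integrableOn_Ioi_rpow_of_lt (by norm_num) one_pos
      exact h1.const_mul _
    refine lt_of_le_of_lt (lintegral_mono_ae ?_) hint.lintegral_lt_top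
    refine (ae_restrict_iff' measurableSet_Ici).2 (ae_of_all _ fun t ht => ?_)
    apply ENNReal.ofReal_le_ofReal
    have ht0 : (0:ℝ) < t := lt_of_lt_of_le one_pos ht
    have hΔ := Δj_le_large ha1 hb1 (le_trans zero_le_one ht : (0:ℝ) ≤ t)
    have key : (Real.exp (-(α+β+1)*t))^2 * Real.exp (2*(α+β+1)*t) = 1 := by
      rw [sq, ← Real.exp_add, ← Real.exp_add,
        show -(α+β+1)*t + -(α+β+1)*t + 2*(α+β+1)*t = 0 by ring, Real.exp_zero]
    have htpow : t ^ (-2:ℝ) = (t⁻¹)^2 := by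
      rw [show (-2:ℝ) = -((2:ℕ):ℝ) by norm_num, Real.rpow_neg ht0.le, Real.rpow_natCast,
        ← inv_pow]
    have h6 : (Real.exp (-(α+β+1)*t) * t⁻¹)^2 * (2^(2*β+1) * Real.exp (2*(α+β+1)*t))
        = 2^(2*β+1) * (t⁻¹)^2 := by
      rw [mul_pow]
      linear_combination ((2:ℝ)^(2*β+1) * (t⁻¹)^2) * key
    calc (Real.exp (-(α+β+1)*t) * t⁻¹)^2 * Δj α β t
        ≤ (Real.exp (-(α+β+1)*t) * t⁻¹)^2 * (2^(2*β+1) * Real.exp (2*(α+β+1)*t)) :=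
          mul_le_mul_of_nonneg_left hΔ (by positivity)
      _ = 2^(2*β+1) * t ^ (-2:ℝ) := by rw [h6, htpow]
  set D : ENNReal := Gq ^ (1/q) * B ^ (1/(2:ℝ)) with hDdef
  have hD_lt : D < ⊤ :=
    ENNReal.mul_lt_top (ENNReal.rpow_lt_top_of_nonneg (by positivity) hGq_lt.ne)
      (ENNReal.rpow_lt_top_of_nonneg (by norm_num) hB_lt.ne)
  refine ⟨D.toReal + 1, by positivity, fun K hK hKb f hf => ?_⟩
  have hop0 : ENNReal.ofReal p ≠ 0 := by
    simp only [ne_eq, ENNReal.ofReal_eq_zero, not_le]; linarith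
  have hrle : (μj α β).restrict (Ioc (0:ℝ) (1/2)) ≤ (μj α β).restrict (Ioi 0) :=
    Measure.restrict_mono (fun x hx => hx.1) le_rfl
  have hfm : AEMeasurable (fun r => (‖f r‖₊ : ENNReal)) ((μj α β).restrict (Ioc (0:ℝ) (1/2))) :=
    (hf.1.mono_measure hrle).enorm
  set Fp : ENNReal := eLpNorm f (ENNReal.ofReal p) ((μj α β).restrict (Ioi 0)) with hFpdef
  have hFp_lt : Fp < ⊤ := hf.2
  have hFp_eq : Fp = (∫⁻ r in Ioi (0:ℝ), (‖f r‖₊ : ENNReal) ^ p ∂(μj α β)) ^ (1/p) := by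
    simp only [hFpdef, eLpNorm_eq_lintegral_rpow_enorm_toReal hop0 ENNReal.ofReal_ne_top,
      ENNReal.toReal_ofReal hp0.le, enorm_eq_nnnorm]
  have hGmeas : Measurable fun r : ℝ => ENNReal.ofReal (r ^ c) :=
    (measurable_id.pow measurable_const).ennreal_ofReal
  set A : ENNReal := ∫⁻ r in Ioc (0:ℝ) (1/2),
      ENNReal.ofReal (r ^ c) * (‖f r‖₊ : ENNReal) ∂(μj α β) with hAdef
  have hA_le : A ≤ Gq ^ (1/q) * Fp := by
    have hh := ENNReal.lintegral_mul_le_Lp_mul_Lq ((μj α β).restrict (Ioc (0:ℝ) (1/2)))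
      hpq.symm hGmeas.aemeasurable hfm
    refine le_trans (le_of_eq ?_) (le_trans hh ?_)
    · rfl
    · refine mul_le_mul' (le_of_eq ?_) ?_
      · rw [hGqdef]
      · rw [hFp_eq]
        exact ENNReal.rpow_le_rpow (lintegral_mono' hrle le_rfl) (by positivity)
  have hA_lt : A < ⊤ := lt_of_le_of_lt hA_le
    (ENNReal.mul_lt_top (ENNReal.rpow_lt_top_of_nonneg (by positivity) hGq_lt.ne) hFp_lt)
  have hAvol : ∀ t : ℝ, 1 ≤ t →
      ENNReal.ofReal ‖∫ r in Ioc (0:ℝ) (1/2), K t r * f r * ((Δj α β r : ℝ) : ℂ)‖ ≤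
        ENNReal.ofReal (Real.exp (-(α+β+1)*t) * t⁻¹) * A := by
    intro t ht
    have ht0 : (0:ℝ) < t := lt_of_lt_of_le one_pos ht
    have hcoef : (0:ℝ) ≤ Real.exp (-(α+β+1)*t) * t⁻¹ :=
      mul_nonneg (Real.exp_pos _).le (inv_nonneg.2 ht0.le)
    have step0 : ENNReal.ofReal ‖∫ r in Ioc (0:ℝ) (1/2), K t r * f r * ((Δj α β r : ℝ) : ℂ)‖ ≤
        ∫⁻ r in Ioc (0:ℝ) (1/2), ENNReal.ofReal ‖K t r * f r * ((Δj α β r : ℝ) : ℂ)‖ :=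
      (ENNReal.ofReal_le_ofReal (norm_integral_le_lintegral_norm _)).trans
        ENNReal.ofReal_toReal_le
    refine step0.trans ?_
    rw [hAdef, lintegral_μj_restrict α β measurableSet_Ioc,
      ← lintegral_const_mul' _ _ ENNReal.ofReal_ne_top]
    refine lintegral_mono_ae ((ae_restrict_iff' measurableSet_Ioc).2
      (ae_of_all _ fun r hr => ?_))
    have hr0 : (0:ℝ) < r := hr.1
    have hΔ0 : (0:ℝ) ≤ Δj α β r := (Δj_pos α β hr0).le
    have hnorm : ‖K t r * f r * ((Δj α β r : ℝ) : ℂ)‖ = ‖K t r‖ * ‖f r‖ * Δj α β r := by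
      rw [norm_mul, norm_mul, Complex.norm_real, Real.norm_eq_abs, abs_of_nonneg hΔ0]
    rw [hnorm]
    have h1 : ‖K t r‖ * ‖f r‖ * Δj α β r ≤
        (Real.exp (-(α+β+1)*t) * t⁻¹) * (Δj α β r * (r ^ c * ‖f r‖)) := by
      have h2 := mul_le_mul_of_nonneg_right
        (mul_le_mul_of_nonneg_right (hKb t r ht hr) (norm_nonneg (f r))) hΔ0
      calc ‖K t r‖ * ‖f r‖ * Δj α β r
          ≤ Real.exp (-(α+β+1)*t) * t⁻¹ * r ^ (-(α+1/2)) * ‖f r‖ * Δj α β r := h2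
        _ = (Real.exp (-(α+β+1)*t) * t⁻¹) * (Δj α β r * (r ^ c * ‖f r‖)) := by
            rw [hcdef]; ring
    calc ENNReal.ofReal (‖K t r‖ * ‖f r‖ * Δj α β r)
        ≤ ENNReal.ofReal ((Real.exp (-(α+β+1)*t) * t⁻¹) * (Δj α β r * (r ^ c * ‖f r‖))) :=
          ENNReal.ofReal_le_ofReal h1
      _ = ENNReal.ofReal (Real.exp (-(α+β+1)*t) * t⁻¹) *
            (ENNReal.ofReal (Δj α β r) * (ENNReal.ofReal (r ^ c) * (‖f r‖₊ : ENNReal))) := by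
          rw [ENNReal.ofReal_mul hcoef, ENNReal.ofReal_mul hΔ0,
            ENNReal.ofReal_mul (Real.rpow_nonneg hr0.le _), ofReal_norm, enorm_eq_nnnorm]
  have main : (∫⁻ t in Ici (1:ℝ), ENNReal.ofReal
      (‖∫ r in Ioc (0:ℝ) (1/2), K t r * f r * ((Δj α β r : ℝ) : ℂ)‖ ^ 2 * Δj α β t)) ≤
      A ^ 2 * B := by
    have hpt : ∀ t ∈ Ici (1:ℝ), ENNReal.ofReal
        (‖∫ r in Ioc (0:ℝ) (1/2), K t r * f r * ((Δj α β r : ℝ) : ℂ)‖ ^ 2 * Δj α β t) ≤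
        A ^ 2 * ENNReal.ofReal ((Real.exp (-(α+β+1)*t) * t⁻¹)^2 * Δj α β t) := by
      intro t ht
      have ht1 : (1:ℝ) ≤ t := ht
      have ht0 : (0:ℝ) < t := lt_of_lt_of_le one_pos ht1
      have hΔ0 : (0:ℝ) ≤ Δj α β t := (Δj_pos α β ht0).le
      have hcoef : (0:ℝ) ≤ Real.exp (-(α+β+1)*t) * t⁻¹ :=
        mul_nonneg (Real.exp_pos _).le (inv_nonneg.2 ht0.le)
      calc ENNReal.ofReal (‖∫ r in Ioc (0:ℝ) (1/2), K t r * f r * ((Δj α β r : ℝ) : ℂ)‖ ^ 2 * Δj α β t) = (ENNReal.ofReal ‖∫ r in Ioc (0:ℝ) (1/2), K t r * f r * ((Δj α β r : ℝ) : ℂ)‖) ^ 2 * ENNReal.ofReal (Δj α β t) := by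
            rw [ENNReal.ofReal_mul (by positivity), ENNReal.ofReal_pow (norm_nonneg _)]
        _ ≤ (ENNReal.ofReal (Real.exp (-(α+β+1)*t) * t⁻¹) * A) ^ 2 * ENNReal.ofReal (Δj α β t) := by
            gcongr
            exact hAvol t ht1
        _ = A ^ 2 * ENNReal.ofReal ((Real.exp (-(α+β+1)*t) * t⁻¹)^2 * Δj α β t) := by
            rw [ENNReal.ofReal_mul (p := (Real.exp (-(α+β+1)*t) * t⁻¹)^2) (by positivity),
              ENNReal.ofReal_pow hcoef, mul_pow]
            ring
    calc (∫⁻ t in Ici (1:ℝ), ENNReal.ofReal (‖∫ r in Ioc (0:ℝ) (1/2), K t r * f r * ((Δj α β r : ℝ) : ℂ)‖ ^ 2 * Δj α β t)) ≤ ∫⁻ t in Ici (1:ℝ), A ^ 2 * ENNReal.ofReal ((Real.exp (-(α+β+1)*t) * t⁻¹)^2 * Δj α β t) :=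
          lintegral_mono_ae ((ae_restrict_iff' measurableSet_Ici).2 (ae_of_all _ hpt))
      _ = A ^ 2 * B := by
          rw [hBdef]; exact lintegral_const_mul' _ _ (ENNReal.pow_ne_top hA_lt.ne)
  have hDD : D ≤ ENNReal.ofReal (D.toReal + 1) := by
    calc D = ENNReal.ofReal D.toReal := (ENNReal.ofReal_toReal hD_lt.ne).symm
      _ ≤ ENNReal.ofReal (D.toReal + 1) := ENNReal.ofReal_le_ofReal (by linarith)
  calc (∫⁻ t in Ici (1:ℝ), ENNReal.ofReal (‖∫ r in Ioc (0:ℝ) (1/2), K t r * f r * ((Δj α β r : ℝ) : ℂ)‖ ^ 2 * Δj α β t)) ^ (1/(2:ℝ)) ≤ (A ^ 2 * B) ^ (1/(2:ℝ)) := ENNReal.rpow_le_rpow main (by norm_num)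
    _ = A * B ^ (1/(2:ℝ)) := by
        rw [ENNReal.mul_rpow_of_nonneg _ _ (by norm_num : (0:ℝ) ≤ 1/2),
          ← ENNReal.rpow_natCast A 2, ← ENNReal.rpow_mul]
        norm_num
    _ ≤ (Gq ^ (1/q) * Fp) * B ^ (1/(2:ℝ)) := mul_le_mul_left hA_le _
    _ = D * Fp := by rw [hDdef]; ring
    _ ≤ ENNReal.ofReal (D.toReal + 1) * Fp := mul_le_mul_left hDD _
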